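/- Let 0 < τ₀ ≤ τ₁ with τ₁ = (n₀+1)τ₀ − γ, n₀ ∈ ℕ, γ ∈ [0,τ₀), a, b ∈ ℝ, and let N : [0,τ₀] → ℝ and M : [0,τ₁] → ℝ be piecewise continuously differentiable (extended by 0 outside their domains). Let s ∈ ℂ and let h = (g₀,…,g_{n₀},f) ∈ D(A_T) (ℂ-valued) satisfy A_T h = s·h and B_T h = 0 (i.e., g₀(0) = 0). Then f(ν) = (e^{sν} − ∫₀^ν N(η)e^{s(ν−η)}dη)·f(0) for all ν ∈ [0,τ₀], and F₀(s)·f(0) = 0 and F₁(s)·f(0) = 0, where F₀(s) = 1 − a·exp(−τ₀s) − ∫₀^{τ₀} N(ν)exp(−νs)dν and F₁(s) = b·exp(−τ₁s) + ∫₀^{τ₁} M(ν)exp(−νs)dν. -/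

import Mathlib

open MeasureTheory Set

noncomputable section

/-- `f` is piecewise continuous on `[a,b]`: continuous off a finite set and bounded. -/
def PwContOn (f : ℝ → ℝ) (a b : ℝ) : Prop :=
  (∃ S : Finset ℝ, ContinuousOn f (Set.Icc a b \ ↑S)) ∧
    ∃ C : ℝ, ∀ x ∈ Set.Icc a b, |f x| ≤ C

/-- `f` is piecewise continuously differentiable on `[a,b]`. -/
def PwC1On (f : ℝ → ℝ) (a b : ℝ) : Prop :=
  PwContOn f a b ∧
    ∃ S : Finset ℝ, DifferentiableOn ℝ f (Set.Icc a b \ ↑S) ∧ PwContOn (deriv f) a b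

/-- Sup norm of the partial trajectory `θ ∈ [-τ,0] ↦ φ(t+θ)`. -/
def wNorm (φ : ℝ → ℝ) (τ t : ℝ) : ℝ :=
  sSup ((fun θ => |φ (t + θ)|) '' Set.Icc (-τ) 0)

/-- `F₀(s) = 1 - a e^{-τ₀ s} - ∫₀^{τ₀} N(ν) e^{-ν s} dν`. -/
def F0 (a τ₀ : ℝ) (N : ℝ → ℝ) (s : ℂ) : ℂ :=
  1 - (a : ℂ) * Complex.exp (-(τ₀ : ℂ) * s)
    - ∫ ν in (0:ℝ)..τ₀, (N ν : ℂ) * Complex.exp (-(ν : ℂ) * s)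

/-- `F₁(s) = b e^{-τ₁ s} + ∫₀^{τ₁} M(ν) e^{-ν s} dν`. -/
def F1 (b τ₁ : ℝ) (M : ℝ → ℝ) (s : ℂ) : ℂ :=
  (b : ℂ) * Complex.exp (-(τ₁ : ℂ) * s)
    + ∫ ν in (0:ℝ)..τ₁, (M ν : ℂ) * Complex.exp (-(ν : ℂ) * s)

/-- `I₁(ν)`, for `ν ∈ [0,τ₀]`. -/
def I1 (N M f g : ℝ → ℝ) (ν : ℝ) : ℝ :=
  g ν + N ν + (∫ η in (0:ℝ)..ν, f η * M (ν - η)) - ∫ η in (0:ℝ)..ν, g η * N (ν - η)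

/-- `I₂(ν)`, for `ν ∈ (τ₀,τ₁]`. -/
def I2 (a τ₀ : ℝ) (N M f g : ℝ → ℝ) (ν : ℝ) : ℝ :=
  g ν - a * g (ν - τ₀) + (∫ η in (0:ℝ)..τ₀, f η * M (ν - η))
    - ∫ η in (ν - τ₀)..ν, g η * N (ν - η)

/-- `I₃(ν)`, for `ν ∈ [τ₁,τ₀+τ₁]`. -/
def I3 (a b τ₀ τ₁ : ℝ) (N M f g : ℝ → ℝ) (ν : ℝ) : ℝ :=
  b * f (ν - τ₁) + (∫ η in (ν - τ₁)..τ₀, f η * M (ν - η))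
    - a * g (ν - τ₀) - ∫ η in (ν - τ₀)..τ₁, g η * N (ν - η)

lemma pw_aesm {f : ℝ → ℝ} {a b : ℝ} (hf : PwContOn f a b)
    (h0 : ∀ x, x ∉ Set.Icc a b → f x = 0) :
    AEStronglyMeasurable f volume := by
  obtain ⟨⟨S, hS⟩, C, hC⟩ := hf
  have hT : MeasurableSet (Set.Icc a b \ ↑S) :=
    measurableSet_Icc.diff (S.finite_toSet.measurableSet)
  have h1 : AEMeasurable f (volume.restrict (Set.Icc a b \ ↑S)) := hS.aemeasurable hT
  have h2 : AEMeasurable ((Set.Icc a b \ ↑S).indicator f) volume :=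
    (aemeasurable_indicator_iff hT).2 h1
  have h3 : (Set.Icc a b \ ↑S).indicator f =ᵐ[volume] f := by
    filter_upwards [measure_eq_zero_iff_ae_notMem.1 (S.finite_toSet.measure_zero volume)] with x hx
    by_cases hxI : x ∈ Set.Icc a b
    · exact Set.indicator_of_mem (Set.mem_diff_of_mem hxI hx) f
    · rw [Set.indicator_of_notMem (fun h => hxI h.1), h0 x hxI]
  exact (aestronglyMeasurable_iff_aemeasurable).2 (h2.congr h3)

lemma pw_bound {f : ℝ → ℝ} {a b : ℝ} (hf : PwContOn f a b)
    (h0 : ∀ x, x ∉ Set.Icc a b → f x = 0) :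
    ∃ C, ∀ x, |f x| ≤ C := by
  obtain ⟨-, C, hC⟩ := hf
  refine ⟨max C 0, fun x => ?_⟩
  by_cases hx : x ∈ Set.Icc a b
  · exact (hC x hx).trans (le_max_left _ _)
  · simp [h0 x hx]

lemma pw_intInt {f : ℝ → ℝ} {a b : ℝ} (hf : PwContOn f a b)
    (h0 : ∀ x, x ∉ Set.Icc a b → f x = 0) (s : ℂ) (c p q : ℝ) :
    IntervalIntegrable (fun x => (f (x + c) : ℂ) * Complex.exp (-(x:ℂ) * s)) volume p q := by
  have hm : AEStronglyMeasurable f volume := pw_aesm hf h0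
  obtain ⟨C, hC⟩ := pw_bound hf h0
  have hms : AEStronglyMeasurable (fun x => f (x + c)) volume :=
    hm.comp_measurePreserving (measurePreserving_add_right volume c)
  have hmc : AEStronglyMeasurable (fun x => (f (x + c) : ℂ)) volume :=
    Complex.continuous_ofReal.comp_aestronglyMeasurable hms
  have hfi : IntervalIntegrable (fun x => (f (x + c) : ℂ)) volume p q := by
    refine (intervalIntegrable_const (c := ((|C| : ℝ) : ℂ))).mono_fun hmc.restrict ?_
    filter_upwards with x
    simp only [Complex.norm_real, Real.norm_eq_abs, abs_abs]
    exact (hC _).trans (le_abs_self C)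
  exact hfi.mul_continuousOn (Continuous.continuousOn (by fun_prop))

lemma ftc_trick {T : ℝ} (s c : ℂ) (φ : ℝ → ℝ)
    (hφ : ∀ p q : ℝ, IntervalIntegrable (fun x => (φ x : ℂ) * Complex.exp (-(x:ℂ) * s)) volume p q)
    (u du : ℝ → ℂ)
    (hu : ∀ x ∈ Set.Icc 0 T, HasDerivWithinAt u (du x) (Set.Icc 0 T) x)
    (heq : ∀ x ∈ Set.Icc 0 T, du x + c * (φ x : ℂ) = s * u x)
    (ν : ℝ) (hν : ν ∈ Set.Icc 0 T) :
    Complex.exp (-(ν:ℂ) * s) * u ν - u 0 =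
      -c * ∫ η in (0:ℝ)..ν, (φ η : ℂ) * Complex.exp (-(η:ℂ) * s) := by
  obtain ⟨hν0, hνT⟩ := hν
  set w : ℝ → ℂ := fun x => Complex.exp (-(x:ℂ) * s) * u x with hw
  have hwderiv : ∀ x ∈ Set.Icc 0 T,
      HasDerivWithinAt w (-c * ((φ x : ℂ) * Complex.exp (-(x:ℂ) * s))) (Set.Icc 0 T) x := by
    intro x hx
    have he : HasDerivWithinAt (fun y : ℝ => Complex.exp (-(y:ℂ) * s)) (-s * Complex.exp (-(x:ℂ) * s)) (Set.Icc 0 T) x := by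
      have h1 : HasDerivAt (fun y : ℝ => Complex.exp (-(y:ℂ) * s)) (-s * Complex.exp (-(x:ℂ) * s)) x := by
        have := ((Complex.hasDerivAt_exp (-(x:ℂ) * s)).comp x
          (((hasDerivAt_id x).ofReal_comp.neg.mul_const s)))
        convert this using 1
        · rfl
        · rfl
        push_cast
        ring
      exact h1.hasDerivWithinAt
    have := he.mul (hu x hx)
    convert this using 1
    · rfl
    · rfl
    have h2 := heq x hx
    have : du x = s * u x - c * (φ x : ℂ) := by linear_combination h2
    rw [this]; ring
  have hcont : ContinuousOn w (Set.Icc 0 ν) := by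
    refine ContinuousOn.mono ?_ (Set.Icc_subset_Icc le_rfl hνT)
    intro x hx
    exact (hwderiv x hx).continuousWithinAt
  have hint : IntervalIntegrable (fun x => -c * ((φ x : ℂ) * Complex.exp (-(x:ℂ) * s))) volume 0 ν :=
    (hφ 0 ν).const_mul (-c)
  have hd : ∀ x ∈ Set.Ioo 0 ν, HasDerivWithinAt w
      (-c * ((φ x : ℂ) * Complex.exp (-(x:ℂ) * s))) (Set.Ioi x) x := by
    intro x hx
    have hxI : x ∈ Set.Icc 0 T := ⟨hx.1.le, hx.2.le.trans hνT⟩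
    have hnhds : Set.Icc 0 T ∈ nhds x :=
      Icc_mem_nhds hx.1 (lt_of_lt_of_le hx.2 hνT)
    exact ((hwderiv x hxI).hasDerivAt hnhds).hasDerivWithinAt
  have := intervalIntegral.integral_eq_sub_of_hasDeriv_right_of_le hν0 hcont hd hint
  rw [intervalIntegral.integral_const_mul] at this
  rw [this]
  simp [hw]

/-- **Eigenfunction computation.** If `h = (g₀,…,g_{n₀},f) ∈ D(A_T)` satisfies
`A_T h = s h` and `B_T h = 0` (i.e. `g₀(0) = 0`), then
`f(ν) = (e^{sν} - ∫₀^ν N(η)e^{s(ν-η)}dη) f(0)`, and `F₀(s)f(0) = 0` and `F₁(s)f(0) = 0`. -/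
theorem stmt13
    (τ₀ τ₁ γ a b : ℝ) (n₀ : ℕ) (N M : ℝ → ℝ) (s : ℂ)
    (hτ₀ : 0 < τ₀) (hττ : τ₀ ≤ τ₁)
    (hτ₁ : τ₁ = (n₀ + 1 : ℝ) * τ₀ - γ) (hγ : 0 ≤ γ ∧ γ < τ₀)
    (hN : PwC1On N 0 τ₀) (hM : PwC1On M 0 τ₁)
    (hN0 : ∀ x, x ∉ Set.Icc 0 τ₀ → N x = 0)
    (hM0 : ∀ x, x ∉ Set.Icc 0 τ₁ → M x = 0)
    (g : ℕ → ℝ → ℂ) (f : ℝ → ℂ) (dg : ℕ → ℝ → ℂ) (df : ℝ → ℂ)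
    (hgderiv : ∀ k ≤ n₀, ∀ x ∈ Set.Icc 0 τ₀,
      HasDerivWithinAt (g k) (dg k x) (Set.Icc 0 τ₀) x)
    (hfderiv : ∀ x ∈ Set.Icc 0 τ₀, HasDerivWithinAt f (df x) (Set.Icc 0 τ₀) x)
    (hbc1 : f τ₀ = (a : ℂ) * f 0)
    (hbc2 : g n₀ τ₀ = (b : ℂ) * f 0)
    (hbc3 : ∀ k < n₀, g k τ₀ = g (k + 1) 0)
    (heigg : ∀ k ≤ n₀, ∀ ν ∈ Set.Icc 0 τ₀,
      dg k ν + f 0 * (M (ν + (k : ℝ) * τ₀ - γ) : ℂ) = s * g k ν)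
    (heigf : ∀ ν ∈ Set.Icc 0 τ₀, df ν + f 0 * (N ν : ℂ) = s * f ν)
    (hB : g 0 0 = 0) :
    (∀ ν ∈ Set.Icc 0 τ₀,
      f ν = (Complex.exp (s * ν)
        - ∫ η in (0:ℝ)..ν, (N η : ℂ) * Complex.exp (s * ((ν : ℂ) - (η : ℂ)))) * f 0) ∧
    F0 a τ₀ N s * f 0 = 0 ∧ F1 b τ₁ M s * f 0 = 0 := by
  -- integrability of N
  have hφN : ∀ p q : ℝ, IntervalIntegrable
      (fun x => (N x : ℂ) * Complex.exp (-(x:ℂ) * s)) volume p q := by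
    intro p q
    simpa using pw_intInt hN.1 hN0 s 0 p q
  -- FTC identity for f
  have ftcf : ∀ ν ∈ Set.Icc 0 τ₀,
      Complex.exp (-(ν:ℂ) * s) * f ν - f 0 =
        -(f 0) * ∫ η in (0:ℝ)..ν, (N η : ℂ) * Complex.exp (-(η:ℂ) * s) :=
    fun ν hν => ftc_trick s (f 0) N hφN f df hfderiv heigf ν hν
  refine ⟨?_, ?_, ?_⟩
  · -- formula for f
    intro ν hν
    have hft := ftcf ν hν
    have hInt : (∫ η in (0:ℝ)..ν, (N η : ℂ) * Complex.exp (s * ((ν:ℂ) - (η:ℂ))))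
        = Complex.exp (s * (ν:ℂ)) * ∫ η in (0:ℝ)..ν, (N η : ℂ) * Complex.exp (-(η:ℂ) * s) := by
      rw [← intervalIntegral.integral_const_mul]
      apply intervalIntegral.integral_congr
      intro η _
      dsimp only
      rw [show s * ((ν:ℂ) - (η:ℂ)) = s * (ν:ℂ) + -(η:ℂ) * s by ring, Complex.exp_add]
      ring
    have hmul : Complex.exp (s * (ν:ℂ)) * Complex.exp (-(ν:ℂ) * s) = 1 := by
      rw [← Complex.exp_add, show s * (ν:ℂ) + -(ν:ℂ) * s = 0 by ring, Complex.exp_zero]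
    rw [hInt]
    linear_combination (Complex.exp (s * (ν:ℂ))) * hft - f ν * hmul
  · -- F0
    have hft := ftcf τ₀ ⟨hτ₀.le, le_rfl⟩
    rw [hbc1] at hft
    rw [F0]
    linear_combination -hft
  · -- F1
    have hGm : ∀ p q : ℝ, IntervalIntegrable
        (fun x => (M x : ℂ) * Complex.exp (-(x:ℂ) * s)) volume p q := by
      intro p q
      simpa using pw_intInt hM.1 hM0 s 0 p q
    set Gm : ℝ → ℂ := fun x => (M x : ℂ) * Complex.exp (-(x:ℂ) * s) with hGmdef
    set aa : ℕ → ℝ := fun k => (k:ℝ) * τ₀ - γ with haadef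
    set Eγ : ℂ := Complex.exp (-(γ:ℂ) * s) with hEγdef
    set P : ℕ → ℂ := fun k =>
      Complex.exp (-(((k:ℝ) * τ₀ : ℝ):ℂ) * s) * (if k = n₀ + 1 then g n₀ τ₀ else g k 0)
      with hPdef
    -- step identity
    have hstep : ∀ k ≤ n₀, P k - P (k+1) = f 0 * Eγ * ∫ x in (aa k)..(aa (k+1)), Gm x := by
      intro k hk
      -- FTC for g k
      have hφk : ∀ p q : ℝ, IntervalIntegrable
          (fun x => (M (x + aa k) : ℂ) * Complex.exp (-(x:ℂ) * s)) volume p q :=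
        fun p q => pw_intInt hM.1 hM0 s (aa k) p q
      have heqk : ∀ x ∈ Set.Icc 0 τ₀,
          dg k x + f 0 * (M (x + aa k) : ℂ) = s * g k x := by
        intro x hx
        have := heigg k hk x hx
        rwa [add_sub_assoc] at this
      have hftk := ftc_trick s (f 0) (fun x => M (x + aa k)) hφk (g k) (dg k)
        (hgderiv k hk) heqk τ₀ ⟨hτ₀.le, le_rfl⟩
      -- substitution in integral
      have hsub : (∫ η in (0:ℝ)..τ₀, (M (η + aa k) : ℂ) * Complex.exp (-(η:ℂ) * s))
          = Complex.exp ((aa k : ℂ) * s) * ∫ x in (aa k)..(aa (k+1)), Gm x := by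
        have hpt : ∀ η : ℝ, (M (η + aa k) : ℂ) * Complex.exp (-(η:ℂ) * s)
            = Complex.exp ((aa k : ℂ) * s) * Gm (η + aa k) := by
          intro η
          have hxp : Complex.exp ((aa k : ℂ) * s) * Complex.exp (-(((η + aa k : ℝ)):ℂ) * s)
              = Complex.exp (-(η:ℂ) * s) := by
            rw [← Complex.exp_add]
            congr 1
            push_cast
            ring
          rw [hGmdef]
          dsimp only
          linear_combination -((M (η + aa k) : ℝ) : ℂ) * hxp
        rw [intervalIntegral.integral_congr (fun η _ => hpt η),
          intervalIntegral.integral_const_mul, intervalIntegral.integral_comp_add_right]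
        congr 2
        · simp
        · rw [haadef]; push_cast; ring
      rw [hsub] at hftk
      -- express P k and P (k+1)
      have hPk : P k = Complex.exp (-(((k:ℝ) * τ₀ : ℝ):ℂ) * s) * g k 0 := by
        rw [hPdef]
        simp only [if_neg (by omega : ¬ k = n₀ + 1)]
      have hPk1 : P (k+1) = Complex.exp (-((((k:ℝ)+1) * τ₀ : ℝ):ℂ) * s) * g k τ₀ := by
        rw [hPdef]
        by_cases hkn : k = n₀
        · subst hkn
          simp only [if_pos rfl]
          push_cast
          ring_nf
        · have hklt : k < n₀ := lt_of_le_of_ne hk hkn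
          simp only [if_neg (by omega : ¬ k + 1 = n₀ + 1), ← hbc3 k hklt]
          push_cast
          ring_nf
      have hA : Complex.exp (-(((k:ℝ) * τ₀ : ℝ):ℂ) * s) * Complex.exp (-(τ₀:ℂ) * s)
          = Complex.exp (-((((k:ℝ)+1) * τ₀ : ℝ):ℂ) * s) := by
        rw [← Complex.exp_add]; congr 1; push_cast; ring
      have hB2 : Complex.exp (-(((k:ℝ) * τ₀ : ℝ):ℂ) * s) * Complex.exp ((aa k : ℂ) * s)
          = Eγ := by
        rw [hEγdef, ← Complex.exp_add]; congr 1; rw [haadef]; push_cast; ring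
      rw [hPk, hPk1]
      linear_combination (-(Complex.exp (-(((k:ℝ) * τ₀ : ℝ):ℂ) * s))) * hftk
        + (g k τ₀) * hA + (f 0 * (∫ x in (aa k)..(aa (k+1)), Gm x)) * hB2
    -- telescoping
    have htel : ∑ k ∈ Finset.range (n₀+1), (P k - P (k+1)) = P 0 - P (n₀+1) :=
      Finset.sum_range_sub' P (n₀+1)
    have hsum2 : ∑ k ∈ Finset.range (n₀+1), (P k - P (k+1))
        = f 0 * Eγ * ∫ x in (aa 0)..(aa (n₀+1)), Gm x := by
      rw [Finset.sum_congr rfl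
        (fun k hk => hstep k (Nat.lt_succ_iff.mp (Finset.mem_range.1 hk)))]
      rw [← Finset.mul_sum]
      congr 1
      exact intervalIntegral.sum_integral_adjacent_intervals (fun k _ => hGm _ _)
    have hP0 : P 0 = 0 := by
      rw [hPdef]
      simp only [if_neg (by omega : ¬ (0:ℕ) = n₀ + 1)]
      simp [hB]
    have hPn : P (n₀+1) = Complex.exp (-((((n₀:ℝ)+1) * τ₀ : ℝ):ℂ) * s) * ((b:ℂ) * f 0) := by
      rw [hPdef]
      simp only [if_pos rfl, hbc2]
      push_cast
      ring_nf
    -- endpoints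
    have haa0 : aa 0 = -γ := by rw [haadef]; simp
    have haan : aa (n₀+1) = τ₁ := by rw [haadef, hτ₁]; push_cast; ring
    -- split off the [-γ,0] part which vanishes
    have h0int : (∫ x in (-γ:ℝ)..(0:ℝ), Gm x) = 0 := by
      have hle : -γ ≤ 0 := by linarith [hγ.1]
      rw [intervalIntegral.integral_of_le hle, integral_Ioc_eq_integral_Ioo]
      apply setIntegral_eq_zero_of_forall_eq_zero
      intro x hx
      rw [hGmdef]
      dsimp only
      rw [hM0 x (by intro h; exact absurd h.1 (not_le.2 hx.2)), Complex.ofReal_zero, zero_mul]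
    have hsplit : (∫ x in (-γ:ℝ)..τ₁, Gm x) = ∫ x in (0:ℝ)..τ₁, Gm x := by
      rw [← intervalIntegral.integral_add_adjacent_intervals (hGm (-γ) 0) (hGm 0 τ₁), h0int,
        zero_add]
    have hmain : -(Complex.exp (-((((n₀:ℝ)+1) * τ₀ : ℝ):ℂ) * s) * ((b:ℂ) * f 0))
        = f 0 * Eγ * ∫ x in (0:ℝ)..τ₁, Gm x := by
      rw [← hsplit, ← haa0, ← haan, ← hsum2, htel, hP0, hPn, zero_sub]
    -- conclude
    have hE : Complex.exp (-(τ₁:ℂ) * s) * Eγ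
        = Complex.exp (-((((n₀:ℝ)+1) * τ₀ : ℝ):ℂ) * s) := by
      rw [hEγdef, ← Complex.exp_add]
      congr 1
      rw [hτ₁]
      push_cast
      ring
    have hEγne : Eγ ≠ 0 := Complex.exp_ne_zero _
    have hfinal : (F1 b τ₁ M s * f 0) * Eγ = 0 := by
      rw [F1]
      linear_combination ((b:ℂ) * f 0) * hE - hmain
    exact (mul_eq_zero.1 hfinal).resolve_right hEγne
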